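/- Let f : Fin n → ℝ be a nonnegative flow vector minimizing the social cost C(f) = Σ_j f_j·(a_j·f_j + b_j) subject to Σ_j f_j = d (with a_j, b_j ≥ 0 and d > 0). Then for any two links j, j' with f_j > 0 and f_{j'} > 0, the marginal costs are equal: 2·a_j·f_j + b_j = 2·a_{j'}·f_{j'} + b_{j'}. -/

import Mathlib

lemma social_opt_aux
    (n : ℕ) (a b f : Fin n → ℝ) (d : ℝ)
    (ha : ∀ j, 0 ≤ a j)
    (hf : ∀ j, 0 ≤ f j) (hsum : ∑ j, f j = d)
    (hmin : ∀ g : Fin n → ℝ, (∀ j, 0 ≤ g j) → ∑ j, g j = d →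
      ∑ j, f j * (a j * f j + b j) ≤ ∑ j, g j * (a j * g j + b j))
    (j j' : Fin n) (hne : j ≠ j') (hj : 0 < f j) :
    2 * a j * f j + b j ≤ 2 * a j' * f j' + b j' := by
  by_contra hcon
  push_neg at hcon
  set D : ℝ := (2 * a j * f j + b j) - (2 * a j' * f j' + b j') with hDdef
  have hD : 0 < D := by simp only [hDdef]; linarith
  have hden : (0:ℝ) < a j + a j' + 1 := by
    have := ha j; have := ha j'; linarith
  set ε : ℝ := min (f j) (D / (2 * (a j + a j' + 1))) with hεdef
  have hε : 0 < ε := lt_min hj (by positivity)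
  have hεf : ε ≤ f j := min_le_left _ _
  have hεD : ε ≤ D / (2 * (a j + a j' + 1)) := min_le_right _ _
  set g : Fin n → ℝ := fun k =>
    f k + ε * ((if k = j' then (1:ℝ) else 0) - (if k = j then 1 else 0)) with hgdef
  have hg0 : ∀ k, 0 ≤ g k := by
    intro k
    by_cases h1 : k = j
    · have h2 : k ≠ j' := by rw [h1]; exact hne
      simp [hgdef, h1, hne]
      have := hf j
      linarith
    · by_cases h2 : k = j'
      · simp [hgdef, h2, Ne.symm hne]
        have := hf j'
        linarith
      · simp [hgdef, h1, h2]
        have := hf k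
        linarith
  have hgsum : ∑ k, g k = d := by
    simp only [hgdef]
    rw [Finset.sum_add_distrib, ← Finset.mul_sum, Finset.sum_sub_distrib]
    simp [Finset.sum_ite_eq', hsum]
  have key := hmin g hg0 hgsum
  have hcost : ∑ k, g k * (a k * g k + b k)
      = ∑ k, f k * (a k * f k + b k)
        + (ε * (2 * a j' * f j' + b j') + ε ^ 2 * a j')
        - (ε * (2 * a j * f j + b j) - ε ^ 2 * a j) := by
    have hterm : ∀ k, g k * (a k * g k + b k)
        = f k * (a k * f k + b k)
          + (if k = j' then ε * (2 * a j' * f j' + b j') + ε ^ 2 * a j' else 0)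
          - (if k = j then ε * (2 * a j * f j + b j) - ε ^ 2 * a j else 0) := by
      intro k
      by_cases h1 : k = j
      · simp [hgdef, h1, hne]
        ring
      · by_cases h2 : k = j'
        · simp [hgdef, h2, Ne.symm hne]
          ring
        · simp [hgdef, h1, h2]
    simp only [hterm]
    rw [Finset.sum_sub_distrib, Finset.sum_add_distrib]
    simp [Finset.sum_ite_eq']
  rw [hcost] at key
  -- key : 0 ≤ -ε*D + ε^2*(a j + a j')
  have h1 : ε * D ≤ ε ^ 2 * (a j + a j') := by nlinarith [key]
  have h2 : D ≤ ε * (a j + a j') := by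
    have := (mul_le_mul_iff_right₀ hε).mp (by nlinarith : ε * D ≤ ε * (ε * (a j + a j')))
    exact this
  have h3 : ε * (a j + a j') ≤ ε * (a j + a j' + 1) := by nlinarith
  have h4 : ε * (a j + a j' + 1) ≤ D / 2 := by
    have := mul_le_mul_of_nonneg_right hεD (le_of_lt hden)
    calc ε * (a j + a j' + 1) ≤ D / (2 * (a j + a j' + 1)) * (a j + a j' + 1) := this
      _ = D / 2 := by field_simp
  linarith

theorem social_opt_equal_marginal_cost
    (n : ℕ) (a b f : Fin n → ℝ) (d : ℝ)
    (ha : ∀ j, 0 ≤ a j) (hb : ∀ j, 0 ≤ b j) (hd : 0 < d)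
    (hf : ∀ j, 0 ≤ f j) (hsum : ∑ j, f j = d)
    (hmin : ∀ g : Fin n → ℝ, (∀ j, 0 ≤ g j) → ∑ j, g j = d →
      ∑ j, f j * (a j * f j + b j) ≤ ∑ j, g j * (a j * g j + b j))
    (j j' : Fin n) (hj : 0 < f j) (hj' : 0 < f j') :
    2 * a j * f j + b j = 2 * a j' * f j' + b j' := by
  by_cases hne : j = j'
  · subst hne; rfl
  · exact le_antisymm
      (social_opt_aux n a b f d ha hf hsum hmin j j' hne hj)
      (social_opt_aux n a b f d ha hf hsum hmin j' j (Ne.symm hne) hj')
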